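/- Backpropagation through time matches re-rolled differentiation for one-step recurrences over ℝ: let φ : ℝ^s × ℝ^a → ℝ^s × ℝ^b be continuously differentiable, i ∈ ℝ^s, and define the unrollings ψ_0(x_0) = (φ(i, x_0)).2, ψ_{k+1}(x_0,…,x_{k+1}) = (φ(σ_{k+1}(x_0,…,x_k), x_{k+1})).2 where σ_0 = i, σ_{k+1}(x_0,…,x_k) = (φ(σ_k(x_0,…,x_{k-1}), x_k)).1. Define the derivative stateful sequence with state ℝ^s × ℝ^s, initial state (0, i), and transition ((Δs, s), (Δx, x)) ↦ (let (ds', dy) = Dφ(s, x)(Δs, Δx); (s', y) = φ(s, x) in ((ds', s'), dy)), where Dφ(p) is the Fréchet derivative of φ at p. Then the k-th output of the induced causal function of this derivative sequence on input stream of pairs (Δx_n, x_n) equals the Fréchet derivative of ψ_k at (x_0,…,x_k) applied to (Δx_0,…,Δx_k). -/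

import Mathlib

noncomputable section

variable {s a b : ℕ}

/-- `σ` states of the unrolling. -/
def unrollState (φ : (Fin s → ℝ) × (Fin a → ℝ) → (Fin s → ℝ) × (Fin b → ℝ))
    (i : Fin s → ℝ) : ∀ k, (Fin k → (Fin a → ℝ)) → (Fin s → ℝ)
  | 0, _ => i
  | k + 1, x => (φ (unrollState φ i k (Fin.init x), x (Fin.last k))).1

/-- The unrollings `ψ_k`. -/
def unroll (φ : (Fin s → ℝ) × (Fin a → ℝ) → (Fin s → ℝ) × (Fin b → ℝ))
    (i : Fin s → ℝ) (k : ℕ) (x : Fin (k + 1) → (Fin a → ℝ)) : Fin b → ℝ :=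
  (φ (unrollState φ i k (Fin.init x), x (Fin.last k))).2

def mealyStates {A B T : Type*} (t0 : T) (ρ : T × A → T × B) (x : ℕ → A) : ℕ → T
  | 0 => t0
  | n + 1 => (ρ (mealyStates t0 ρ x n, x n)).1

def mealyInduced {A B T : Type*} (t0 : T) (ρ : T × A → T × B) (x : ℕ → A) (n : ℕ) : B :=
  (ρ (mealyStates t0 ρ x n, x n)).2

def initCLM (a k : ℕ) : (Fin (k+1) → (Fin a → ℝ)) →L[ℝ] (Fin k → (Fin a → ℝ)) :=
  ContinuousLinearMap.pi (fun j => ContinuousLinearMap.proj j.castSucc)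

lemma contDiff_unrollState (φ : (Fin s → ℝ) × (Fin a → ℝ) → (Fin s → ℝ) × (Fin b → ℝ))
    (hφ : ContDiff ℝ 1 φ) (i : Fin s → ℝ) :
    ∀ k, ContDiff ℝ 1 (unrollState φ i k)
  | 0 => contDiff_const
  | k + 1 => by
    have e : unrollState φ i (k+1)
        = fun x => (φ (unrollState φ i k (Fin.init x), x (Fin.last k))).1 := rfl
    rw [e]
    exact ContDiff.fst <| hφ.comp <|
      ContDiff.prodMk ((contDiff_unrollState φ hφ i k).comp (initCLM a k).contDiff)
        (contDiff_apply (𝕜 := ℝ) (E := Fin a → ℝ) (i := Fin.last k))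

lemma hasFDerivAt_inner (φ : (Fin s → ℝ) × (Fin a → ℝ) → (Fin s → ℝ) × (Fin b → ℝ))
    (hφ : ContDiff ℝ 1 φ) (i : Fin s → ℝ) (k : ℕ) (x : Fin (k+1) → (Fin a → ℝ)) :
    HasFDerivAt (fun y : Fin (k+1) → (Fin a → ℝ) =>
        (unrollState φ i k (Fin.init y), y (Fin.last k)))
      (((fderiv ℝ (unrollState φ i k) (Fin.init x)).comp (initCLM a k)).prod
        (ContinuousLinearMap.proj (Fin.last k))) x := by
  have h1 : HasFDerivAt (fun y : Fin (k+1) → (Fin a → ℝ) => unrollState φ i k (Fin.init y))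
      ((fderiv ℝ (unrollState φ i k) (Fin.init x)).comp (initCLM a k)) x :=
    (((contDiff_unrollState φ hφ i k).differentiable one_ne_zero (Fin.init x)).hasFDerivAt).comp x
      (initCLM a k).hasFDerivAt
  exact h1.prodMk (hasFDerivAt_apply (Fin.last k) x)

lemma fderiv_state_succ (φ : (Fin s → ℝ) × (Fin a → ℝ) → (Fin s → ℝ) × (Fin b → ℝ))
    (hφ : ContDiff ℝ 1 φ) (i : Fin s → ℝ) (k : ℕ)
    (x Δx : Fin (k+1) → (Fin a → ℝ)) :
    fderiv ℝ (unrollState φ i (k+1)) x Δx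
      = (fderiv ℝ φ (unrollState φ i k (Fin.init x), x (Fin.last k))
          (fderiv ℝ (unrollState φ i k) (Fin.init x) (Fin.init Δx), Δx (Fin.last k))).1 := by
  have hin := hasFDerivAt_inner φ hφ i k x
  have hφ' := (hφ.differentiable one_ne_zero
    (unrollState φ i k (Fin.init x), x (Fin.last k))).hasFDerivAt
  have H : HasFDerivAt (unrollState φ i (k+1))
      ((ContinuousLinearMap.fst ℝ _ _).comp
        ((fderiv ℝ φ (unrollState φ i k (Fin.init x), x (Fin.last k))).comp
          ((((fderiv ℝ (unrollState φ i k) (Fin.init x)).comp (initCLM a k))).prod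
            (ContinuousLinearMap.proj (Fin.last k))))) x := by
    have e : unrollState φ i (k+1)
        = fun y => (φ (unrollState φ i k (Fin.init y), y (Fin.last k))).1 := rfl
    rw [e]
    exact (hφ'.comp x hin).fst
  rw [H.fderiv]
  rfl

lemma fderiv_unroll_eq (φ : (Fin s → ℝ) × (Fin a → ℝ) → (Fin s → ℝ) × (Fin b → ℝ))
    (hφ : ContDiff ℝ 1 φ) (i : Fin s → ℝ) (k : ℕ)
    (x Δx : Fin (k+1) → (Fin a → ℝ)) :
    fderiv ℝ (fun y => (φ (unrollState φ i k (Fin.init y), y (Fin.last k))).2) x Δx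
      = (fderiv ℝ φ (unrollState φ i k (Fin.init x), x (Fin.last k))
          (fderiv ℝ (unrollState φ i k) (Fin.init x) (Fin.init Δx), Δx (Fin.last k))).2 := by
  have hin := hasFDerivAt_inner φ hφ i k x
  have hφ' := (hφ.differentiable one_ne_zero
    (unrollState φ i k (Fin.init x), x (Fin.last k))).hasFDerivAt
  have H := (hφ'.comp x hin).snd
  simp only [Function.comp_def] at H
  rw [H.fderiv]
  rfl


lemma mealy_state_eq (φ : (Fin s → ℝ) × (Fin a → ℝ) → (Fin s → ℝ) × (Fin b → ℝ))
    (hφ : ContDiff ℝ 1 φ) (i : Fin s → ℝ) (Δx x : ℕ → (Fin a → ℝ)) :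
    ∀ k, mealyStates ((0 : Fin s → ℝ), i)
      (fun p : ((Fin s → ℝ) × (Fin s → ℝ)) × ((Fin a → ℝ) × (Fin a → ℝ)) =>
        let d := fderiv ℝ φ (p.1.2, p.2.2) (p.1.1, p.2.1)
        let o := φ (p.1.2, p.2.2)
        ((d.1, o.1), d.2))
      (fun n => (Δx n, x n)) k
      = (fderiv ℝ (unrollState φ i k) (fun j : Fin k => x j) (fun j : Fin k => Δx j),
         unrollState φ i k (fun j : Fin k => x j))
  | 0 => by
    have e0 : unrollState (s := s) (b := b) φ i 0 = fun _ => i := rfl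
    simp [mealyStates, e0]
  | k + 1 => by
    have IH := mealy_state_eq φ hφ i Δx x k
    have hinit : Fin.init (fun j : Fin (k+1) => x ↑j) = fun j : Fin k => x ↑j := by
      funext j; simp [Fin.init]
    have hinitΔ : Fin.init (fun j : Fin (k+1) => Δx ↑j) = fun j : Fin k => Δx ↑j := by
      funext j; simp [Fin.init]
    have estep : mealyStates ((0 : Fin s → ℝ), i)
        (fun p : ((Fin s → ℝ) × (Fin s → ℝ)) × ((Fin a → ℝ) × (Fin a → ℝ)) =>
          let d := fderiv ℝ φ (p.1.2, p.2.2) (p.1.1, p.2.1)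
          let o := φ (p.1.2, p.2.2)
          ((d.1, o.1), d.2))
        (fun n => (Δx n, x n)) (k+1)
        = ((fderiv ℝ φ (unrollState φ i k (fun j : Fin k => x ↑j), x k)
              (fderiv ℝ (unrollState φ i k) (fun j : Fin k => x ↑j)
                (fun j : Fin k => Δx ↑j), Δx k)).1,
           (φ (unrollState φ i k (fun j : Fin k => x ↑j), x k)).1) := by
      show ((fun p : ((Fin s → ℝ) × (Fin s → ℝ)) × ((Fin a → ℝ) × (Fin a → ℝ)) =>
          let d := fderiv ℝ φ (p.1.2, p.2.2) (p.1.1, p.2.1)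
          let o := φ (p.1.2, p.2.2)
          ((d.1, o.1), d.2))
        (mealyStates ((0 : Fin s → ℝ), i) _ (fun n => (Δx n, x n)) k, (Δx k, x k))).1 = _
      rw [IH]
    rw [estep]
    refine Prod.ext ?_ ?_
    · rw [fderiv_state_succ φ hφ i k
        (fun j : Fin (k+1) => x ↑j) (fun j : Fin (k+1) => Δx ↑j), hinit, hinitΔ]
      simp
    · have e : unrollState φ i (k+1) (fun j : Fin (k+1) => x ↑j)
          = (φ (unrollState φ i k (Fin.init (fun j : Fin (k+1) => x ↑j)),
              (fun j : Fin (k+1) => x ↑j) (Fin.last k))).1 := rfl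
      rw [e, hinit]
      simp

/-- Backpropagation through time matches re-rolled differentiation. -/
theorem bptt_matches_derivative
    (φ : (Fin s → ℝ) × (Fin a → ℝ) → (Fin s → ℝ) × (Fin b → ℝ))
    (hφ : ContDiff ℝ 1 φ) (i : Fin s → ℝ)
    (Δx x : ℕ → (Fin a → ℝ)) (k : ℕ) :
    mealyInduced ((0 : Fin s → ℝ), i)
      (fun p : ((Fin s → ℝ) × (Fin s → ℝ)) × ((Fin a → ℝ) × (Fin a → ℝ)) =>
        let d := fderiv ℝ φ (p.1.2, p.2.2) (p.1.1, p.2.1)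
        let o := φ (p.1.2, p.2.2)
        ((d.1, o.1), d.2))
      (fun n => (Δx n, x n)) k
      = fderiv ℝ (unroll φ i k) (fun j : Fin (k + 1) => x j)
          (fun j : Fin (k + 1) => Δx j) := by
  have IH := mealy_state_eq φ hφ i Δx x k
  have hinit : Fin.init (fun j : Fin (k+1) => x ↑j) = fun j : Fin k => x ↑j := by
    funext j; simp [Fin.init]
  have hinitΔ : Fin.init (fun j : Fin (k+1) => Δx ↑j) = fun j : Fin k => Δx ↑j := by
    funext j; simp [Fin.init]
  have eR : fderiv ℝ (unroll φ i k) (fun j : Fin (k + 1) => x ↑j)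
      (fun j : Fin (k + 1) => Δx ↑j)
      = (fderiv ℝ φ (unrollState φ i k (fun j : Fin k => x ↑j), x k)
          (fderiv ℝ (unrollState φ i k) (fun j : Fin k => x ↑j)
            (fun j : Fin k => Δx ↑j), Δx k)).2 := by
    have e : unroll φ i k
        = fun y => (φ (unrollState φ i k (Fin.init y), y (Fin.last k))).2 := rfl
    rw [e, fderiv_unroll_eq φ hφ i k, hinit, hinitΔ]
    simp
  rw [eR]
  show ((fun p : ((Fin s → ℝ) × (Fin s → ℝ)) × ((Fin a → ℝ) × (Fin a → ℝ)) =>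
      let d := fderiv ℝ φ (p.1.2, p.2.2) (p.1.1, p.2.1)
      let o := φ (p.1.2, p.2.2)
      ((d.1, o.1), d.2))
    (mealyStates ((0 : Fin s → ℝ), i) _ (fun n => (Δx n, x n)) k, (Δx k, x k))).2 = _
  rw [IH]


end
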